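/- Let G be a connected d-regular vertex-transitive graph. Then G is d-edge-connected: removing any set of fewer than d edges leaves G connected. -/

import Mathlib

noncomputable section

namespace Stmt13Aux

open Finset
open scoped Classical

variable {V : Type*} [Fintype V]

/-- Number of ordered crossing pairs (v,w) with v ∈ S, w ∉ S, v ~ w. -/
private def cut (G : SimpleGraph V) (S : Finset V) : ℕ :=
  ∑ v ∈ univ, ∑ w ∈ univ, if v ∈ S ∧ w ∉ S ∧ G.Adj v w then 1 else 0

private def indeg (G : SimpleGraph V) (S : Finset V) (v : V) : ℕ :=
  ∑ w ∈ univ, if w ∈ S ∧ G.Adj v w then 1 else 0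

private def outdeg (G : SimpleGraph V) (S : Finset V) (v : V) : ℕ :=
  ∑ w ∈ univ, if w ∉ S ∧ G.Adj v w then 1 else 0

private lemma cut_submod (G : SimpleGraph V) (A B : Finset V) :
    cut G (A ∩ B) + cut G (A ∪ B) ≤ cut G A + cut G B := by
  unfold cut
  rw [← Finset.sum_add_distrib, ← Finset.sum_add_distrib]
  refine Finset.sum_le_sum fun v _ => ?_
  rw [← Finset.sum_add_distrib, ← Finset.sum_add_distrib]
  refine Finset.sum_le_sum fun w _ => ?_
  by_cases h1 : v ∈ A <;> by_cases h2 : v ∈ B <;> by_cases h3 : w ∈ A <;> by_cases h4 : w ∈ B <;>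
    simp [Finset.mem_inter, Finset.mem_union, h1, h2, h3, h4] <;> split_ifs <;> omega

private lemma cut_compl (G : SimpleGraph V) (S : Finset V) : cut G Sᶜ = cut G S := by
  unfold cut
  rw [Finset.sum_comm]
  refine Finset.sum_congr rfl fun v _ => Finset.sum_congr rfl fun w _ => ?_
  refine if_congr ?_ rfl rfl
  simp only [Finset.mem_compl, not_not]
  rw [G.adj_comm]
  tauto

private lemma cut_map (G : SimpleGraph V) (φ : G ≃g G) (A : Finset V) :
    cut G (A.image φ) = cut G A := by
  have himg : ∀ x : V, φ x ∈ A.image φ ↔ x ∈ A := by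
    intro x
    constructor
    · intro hx
      obtain ⟨y, hy, he⟩ := Finset.mem_image.mp hx
      rwa [← φ.toEquiv.injective he]
    · exact fun hx => Finset.mem_image_of_mem _ hx
  unfold cut
  refine (Fintype.sum_bijective (⇑φ) φ.toEquiv.bijective _ _ fun v => ?_).symm
  refine Fintype.sum_bijective (⇑φ) φ.toEquiv.bijective _ _ fun w => ?_
  refine if_congr ?_ rfl rfl
  rw [himg v, himg w, φ.map_adj_iff]

private lemma indeg_map (G : SimpleGraph V) (φ : G ≃g G) (A : Finset V) (u : V) :
    indeg G (A.image φ) (φ u) = indeg G A u := by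
  have himg : ∀ x : V, φ x ∈ A.image φ ↔ x ∈ A := by
    intro x
    constructor
    · intro hx
      obtain ⟨y, hy, he⟩ := Finset.mem_image.mp hx
      rwa [← φ.toEquiv.injective he]
    · exact fun hx => Finset.mem_image_of_mem _ hx
  unfold indeg
  refine (Fintype.sum_bijective (⇑φ) φ.toEquiv.bijective _ _ fun w => ?_).symm
  refine if_congr ?_ rfl rfl
  rw [himg w, φ.map_adj_iff]

private lemma cut_eq_sum (G : SimpleGraph V) (S : Finset V) :
    cut G S = ∑ v ∈ S, outdeg G S v := by
  unfold cut outdeg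
  rw [← Finset.sum_subset (Finset.subset_univ S)
    (fun v _ hv => Finset.sum_eq_zero fun w _ => by simp [hv])]
  exact Finset.sum_congr rfl fun v hv => Finset.sum_congr rfl fun w _ => by simp [hv]

private lemma outdeg_add_indeg {d : ℕ} (G : SimpleGraph V)
    (hreg : ∀ v : V, (G.neighborSet v).ncard = d) (S : Finset V) (v : V) :
    outdeg G S v + indeg G S v = d := by
  have hd : ∑ w ∈ univ, (if G.Adj v w then 1 else 0) = d := by
    rw [← hreg v, Set.ncard_eq_toFinset_card']
    have hts : (G.neighborSet v).toFinset = univ.filter (fun w => G.Adj v w) := by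
      ext w; simp [SimpleGraph.mem_neighborSet]
    rw [hts, Finset.card_filter]
  rw [← hd]
  unfold outdeg indeg
  rw [← Finset.sum_add_distrib]
  exact Finset.sum_congr rfl fun w _ => by by_cases h : w ∈ S <;> simp [h]

private lemma indeg_lt_card (G : SimpleGraph V) (A : Finset V) (v : V) (hv : v ∈ A) :
    indeg G A v + 1 ≤ A.card := by
  have h1 : indeg G A v ≤ (A.erase v).card := by
    unfold indeg
    have : ∀ w ∈ univ, (if w ∈ A ∧ G.Adj v w then 1 else 0) ≤ (if w ∈ A.erase v then 1 else 0) := by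
      intro w _
      by_cases h : w ∈ A ∧ G.Adj v w
      · have : w ∈ A.erase v := Finset.mem_erase.mpr ⟨h.2.ne', h.1⟩
        simp [h, this]
      · simp [h]
    calc indeg G A v ≤ ∑ w ∈ univ, (if w ∈ A.erase v then 1 else 0) := Finset.sum_le_sum this
      _ = (A.erase v).card := by
          rw [← Finset.card_filter]
          congr 1
          ext w
          simp
  have h2 : (A.erase v).card = A.card - 1 := Finset.card_erase_of_mem hv
  have h3 : 1 ≤ A.card := Finset.card_pos.mpr ⟨v, hv⟩
  omega

private lemma walk_cross {G : SimpleGraph V} {S : Finset V} :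
    ∀ {u x : V}, G.Walk u x → u ∈ S → x ∉ S → ∃ v w, v ∈ S ∧ w ∉ S ∧ G.Adj v w := by
  intro u x p
  induction p with
  | nil => intro h1 h2; exact absurd h1 h2
  | @cons a b c hadj p ih =>
    intro h1 h2
    by_cases hb : b ∈ S
    · exact ih hb h2
    · exact ⟨a, b, h1, hb, hadj⟩

private lemma cut_pos {G : SimpleGraph V} (h : G.Preconnected) {S : Finset V}
    (hS : S.Nonempty) (hS' : S ≠ univ) : 1 ≤ cut G S := by
  obtain ⟨x, hx⟩ := hS
  have hy : ∃ y, y ∉ S := by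
    by_contra hc; push_neg at hc; exact hS' (Finset.eq_univ_iff_forall.mpr hc)
  obtain ⟨y, hy⟩ := hy
  obtain ⟨p⟩ := h x y
  obtain ⟨v, w, hv, hw, hadj⟩ := walk_cross p hx hy
  unfold cut
  have h1 : (1:ℕ) ≤ ∑ w' ∈ univ, if v ∈ S ∧ w' ∉ S ∧ G.Adj v w' then 1 else 0 := by
    have := Finset.single_le_sum (f := fun w' => if v ∈ S ∧ w' ∉ S ∧ G.Adj v w' then 1 else 0)
      (fun i _ => Nat.zero_le _) (Finset.mem_univ w)
    simpa [hv, hw, hadj] using this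
  exact le_trans h1 (Finset.single_le_sum
    (f := fun v => ∑ w ∈ univ, if v ∈ S ∧ w ∉ S ∧ G.Adj v w then 1 else 0)
    (fun i _ => Nat.zero_le _) (Finset.mem_univ v))

end Stmt13Aux

/-- Mader, Watkins: A connected `d`-regular vertex-transitive graph is
`d`-edge-connected: removing any set of fewer than `d` edges leaves it connected. -/
theorem statement13 {V : Type*} [Fintype V] (G : SimpleGraph V) (d : ℕ)
    (htrans : ∀ u v : V, ∃ φ : G ≃g G, φ u = v)
    (hreg : ∀ v : V, (G.neighborSet v).ncard = d)
    (hconn : G.Connected) :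
    ∀ F : Set (Sym2 V), F ⊆ G.edgeSet → F.ncard < d →
      (G.deleteEdges F).Connected := by
  classical
  intro F hFsub hFcard
  by_contra hnc
  open Finset Stmt13Aux in
  haveI hne : Nonempty V := hconn.nonempty
  have hpre : ¬ (G.deleteEdges F).Preconnected := by
    intro h
    exact hnc ⟨h⟩
  rw [SimpleGraph.Preconnected] at hpre
  push_neg at hpre
  obtain ⟨u, v, huv⟩ := hpre
  set S0 : Finset V := Finset.univ.filter (fun x => (G.deleteEdges F).Reachable u x) with hS0
  have hu : u ∈ S0 := by
    rw [hS0, Finset.mem_filter]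
    exact ⟨Finset.mem_univ u, SimpleGraph.Reachable.refl u⟩
  have hv : v ∉ S0 := by
    rw [hS0, Finset.mem_filter]
    exact fun h => huv h.2
  -- the cut of S0 is at most |F|
  have hcutS0 : Stmt13Aux.cut G S0 ≤ F.ncard := by
    have hF : F.Finite := Set.toFinite F
    rw [Set.ncard_eq_toFinset_card F hF]
    unfold Stmt13Aux.cut
    rw [← Finset.sum_product']
    rw [← Finset.card_filter]
    refine Finset.card_le_card_of_injOn (fun p : V × V => s(p.1, p.2)) ?_ ?_
    · intro p hp
      simp only [Finset.mem_coe, Finset.mem_filter] at hp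
      obtain ⟨-, h1, h2, h3⟩ := hp
      rw [Finset.mem_coe, Set.Finite.mem_toFinset]
      by_contra hFm
      have hadj : (G.deleteEdges F).Adj p.1 p.2 := by
        rw [SimpleGraph.deleteEdges_adj]
        exact ⟨h3, hFm⟩
      have hr1 : (G.deleteEdges F).Reachable u p.1 := (Finset.mem_filter.mp (hS0 ▸ h1)).2
      have hmem : p.2 ∈ S0 := by
        rw [hS0, Finset.mem_filter]
        exact ⟨Finset.mem_univ _, hr1.trans hadj.reachable⟩
      exact h2 hmem
    · intro p hp q hq he
      simp only [Finset.mem_coe, Finset.mem_filter] at hp hq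
      obtain ⟨a, b⟩ := p
      obtain ⟨c, e⟩ := q
      rw [Sym2.eq_iff] at he
      rcases he with ⟨ha, hb⟩ | ⟨ha, hb⟩
      · simp only at ha hb; simp [ha, hb]
      · exact absurd (ha ▸ hp.2.1) hq.2.2.1
  have hdS0 : Stmt13Aux.cut G S0 < d := lt_of_le_of_lt hcutS0 hFcard
  -- the family of proper nonempty subsets
  set P : Finset (Finset V) := Finset.univ.filter (fun S => S.Nonempty ∧ S ≠ Finset.univ) with hP
  have hS0P : S0 ∈ P := by
    simp only [hP, Finset.mem_filter, Finset.mem_univ, true_and]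
    exact ⟨⟨u, hu⟩, fun h => hv (h ▸ Finset.mem_univ v)⟩
  set n := Fintype.card V with hn
  obtain ⟨A, hAP, hAmin⟩ := Finset.exists_min_image P
    (fun S => Stmt13Aux.cut G S * (n + 1) + S.card) ⟨S0, hS0P⟩
  have hAne : A.Nonempty := by
    have := hAP; simp only [hP, Finset.mem_filter] at this; exact this.2.1
  have hAuniv : A ≠ Finset.univ := by
    have := hAP; simp only [hP, Finset.mem_filter] at this; exact this.2.2
  -- A realizes the global minimum of the cut
  have hmin : ∀ S ∈ P, Stmt13Aux.cut G A ≤ Stmt13Aux.cut G S := by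
    intro S hS
    have h := hAmin S hS
    have hSn : S.card ≤ n := by simpa [hn] using Finset.card_le_univ S
    by_contra hlt
    push_neg at hlt
    nlinarith
  have hcutA : Stmt13Aux.cut G A < d := lt_of_le_of_lt (hmin S0 hS0P) hdS0
  have hcutApos : 1 ≤ Stmt13Aux.cut G A := Stmt13Aux.cut_pos hconn.preconnected hAne hAuniv
  have hAcard : A.card < n := by
    have : A ⊂ Finset.univ := Finset.ssubset_univ_iff.mpr hAuniv
    simpa [hn] using Finset.card_lt_card this
  have hAcard1 : 1 ≤ A.card := Finset.card_pos.mpr hAne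
  -- A is at most half the vertices
  have hAhalf : 2 * A.card ≤ n := by
    have hAcP : Aᶜ ∈ P := by
      simp only [hP, Finset.mem_filter, Finset.mem_univ, true_and]
      constructor
      · rw [← Finset.card_pos, Finset.card_compl]
        omega
      · intro h
        have : (Aᶜ : Finset V).card = n := by rw [h]; simp [hn]
        rw [Finset.card_compl] at this
        omega
    have h := hAmin Aᶜ hAcP
    rw [Stmt13Aux.cut_compl] at h
    have hcc : (Aᶜ : Finset V).card = n - A.card := by simp [Finset.card_compl, hn]
    omega
  -- block property: images of A under automorphisms are equal or disjoint
  have hblock : ∀ φ : G ≃g G, ((A.image φ) ∩ A).Nonempty → A.image φ = A := by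
    intro φ hne2
    by_contra hne3
    have hBcard : (A.image φ).card = A.card :=
      Finset.card_image_of_injective _ φ.toEquiv.injective
    have hBcut : Stmt13Aux.cut G (A.image φ) = Stmt13Aux.cut G A := Stmt13Aux.cut_map G φ A
    have hBP : A.image φ ∈ P := by
      simp only [hP, Finset.mem_filter, Finset.mem_univ, true_and]
      constructor
      · rw [← Finset.card_pos, hBcard]; omega
      · intro h
        have : (A.image φ).card = n := by rw [h]; simp [hn]
        omega
    have hcardAB : (A ∪ A.image φ).card + (A ∩ A.image φ).card = A.card + (A.image φ).card :=
      Finset.card_union_add_card_inter A (A.image φ)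
    have hInter1 : 1 ≤ (A ∩ A.image φ).card := by
      rw [Finset.inter_comm]; exact Finset.card_pos.mpr hne2
    have hABuniv : A ∪ A.image φ ≠ Finset.univ := by
      intro h
      have : (A ∪ A.image φ).card = n := by rw [h]; simp [hn]
      omega
    have hUP : A ∪ A.image φ ∈ P := by
      simp only [hP, Finset.mem_filter, Finset.mem_univ, true_and]
      exact ⟨Finset.Nonempty.mono Finset.subset_union_left hAne, hABuniv⟩
    have hIP : A ∩ A.image φ ∈ P := by
      simp only [hP, Finset.mem_filter, Finset.mem_univ, true_and]
      constructor
      · rw [Finset.inter_comm]; exact hne2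
      · intro h
        have hsub : Finset.univ ⊆ A := h ▸ Finset.inter_subset_left
        exact hAuniv (Finset.univ_subset_iff.mp hsub)
    have hsubm := Stmt13Aux.cut_submod G A (A.image φ)
    have hIc := hmin _ hIP
    have hUc := hmin _ hUP
    have hIeq : Stmt13Aux.cut G (A ∩ A.image φ) = Stmt13Aux.cut G A := by omega
    have hm := hAmin (A ∩ A.image φ) hIP
    rw [hIeq] at hm
    have hIcard : A.card ≤ (A ∩ A.image φ).card := by omega
    have hIA : A ∩ A.image φ = A :=
      Finset.eq_of_subset_of_card_le Finset.inter_subset_left hIcard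
    have hAB : A ⊆ A.image φ := Finset.inter_eq_left.mp hIA
    have : A.image φ = A :=
      (Finset.eq_of_subset_of_card_le hAB (by omega)).symm
    exact hne3 this
  -- induced regularity on A
  obtain ⟨u0, hu0⟩ := hAne
  set k := Stmt13Aux.indeg G A u0 with hk
  have hkA : ∀ w ∈ A, Stmt13Aux.indeg G A w = k := by
    intro w hwA
    obtain ⟨φ, hφ⟩ := htrans u0 w
    have hBA : A.image φ = A := by
      apply hblock φ
      exact ⟨w, Finset.mem_inter.mpr ⟨hφ ▸ Finset.mem_image_of_mem _ hu0, hwA⟩⟩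
    calc Stmt13Aux.indeg G A w = Stmt13Aux.indeg G (A.image φ) (φ u0) := by rw [hBA, hφ]
      _ = Stmt13Aux.indeg G A u0 := Stmt13Aux.indeg_map G φ A u0
  have hkd : k ≤ d := by
    have := Stmt13Aux.outdeg_add_indeg G hreg A u0
    omega
  have hka : k + 1 ≤ A.card := Stmt13Aux.indeg_lt_card G A u0 hu0
  have hcount : Stmt13Aux.cut G A = A.card * (d - k) := by
    rw [Stmt13Aux.cut_eq_sum]
    rw [Finset.sum_congr rfl (fun w hw => ?_), Finset.sum_const, smul_eq_mul]
    have h1 := Stmt13Aux.outdeg_add_indeg G hreg A w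
    have h2 := hkA w hw
    omega
  have he1 : 1 ≤ d - k := by
    rcases Nat.eq_zero_or_pos (d - k) with h | h
    · rw [h, Nat.mul_zero] at hcount; omega
    · exact h
  have hfinal : d ≤ Stmt13Aux.cut G A := by
    rw [hcount]
    calc d = k + (d - k) := by omega
      _ ≤ k * (d - k) + (d - k) := by
          have : k ≤ k * (d - k) := Nat.le_mul_of_pos_right k he1
          omega
      _ = (k + 1) * (d - k) := by ring
      _ ≤ A.card * (d - k) := Nat.mul_le_mul_right _ hka
  omega
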